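/- arXiv:1310.3377 — 2 statements merged into one kernel-verified Lean document; each statement's English description precedes it below -/
import Mathlib

section
/- Let b ∈ ℝ with b ≥ 2 or b ≤ 0. Then the function f_b(n, w) = n^{2-b} w^b is convex on the open set {(n,w) ∈ ℝ² : n > 0, w > 0}. -/
open Set

private lemma convexOn_rpow_nonpos {r : ℝ} (hr : r ≤ 0) :
    ConvexOn ℝ (Set.Ioi (0:ℝ)) fun x : ℝ => x ^ r := by
  have hEv : ∀ x ∈ Set.Ioi (0:ℝ),
      deriv (fun x : ℝ => x ^ r) x = r * x ^ (r - 1) := fun x hx =>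
    Real.deriv_rpow_const x r
  apply convexOn_of_deriv2_nonneg' (convex_Ioi 0)
  · intro x hx
    exact (Real.differentiableAt_rpow_const_of_ne r (ne_of_gt hx)).differentiableWithinAt
  · intro x hx
    have h1 : DifferentiableAt ℝ (fun x : ℝ => r * x ^ (r - 1)) x :=
      (Real.differentiableAt_rpow_const_of_ne _ (ne_of_gt hx)).const_mul r
    have hee : deriv (fun x : ℝ => x ^ r) =ᶠ[nhds x] fun y => r * y ^ (r - 1) := by
      filter_upwards [Ioi_mem_nhds hx] with y hy
      exact Real.deriv_rpow_const y r
    exact (h1.congr_of_eventuallyEq hee).differentiableWithinAt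
  · intro x hx
    have hee : deriv (fun x : ℝ => x ^ r) =ᶠ[nhds x] fun y => r * y ^ (r - 1) := by
      filter_upwards [Ioi_mem_nhds hx] with y hy
      exact Real.deriv_rpow_const y r
    have h2 : deriv^[2] (fun x : ℝ => x ^ r) x
        = r * ((r - 1) * x ^ (r - 1 - 1)) := by
      have : deriv (deriv (fun x : ℝ => x ^ r)) x
          = deriv (fun y : ℝ => r * y ^ (r - 1)) x := hee.deriv_eq
      rw [Function.iterate_succ, Function.iterate_one, Function.comp_apply, this,
        deriv_const_mul _ (Real.differentiableAt_rpow_const_of_ne _ (ne_of_gt hx)),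
        Real.deriv_rpow_const x (r - 1)]
    rw [h2]
    have hx' : (0:ℝ) < x ^ (r - 1 - 1) := Real.rpow_pos_of_pos hx _
    nlinarith [mul_nonneg (mul_nonneg (neg_nonneg.mpr hr) (by linarith : (0:ℝ) ≤ 1 - r)) hx'.le]

private lemma key_convex {r : ℝ} (hr : r ≤ 0) :
    ConvexOn ℝ {p : ℝ × ℝ | 0 < p.1 ∧ 0 < p.2}
      (fun p : ℝ × ℝ => p.1 ^ r * p.2 ^ (1 - r)) := by
  have hs : Convex ℝ {p : ℝ × ℝ | 0 < p.1 ∧ 0 < p.2} :=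
    (convex_Ioi (0:ℝ)).prod (convex_Ioi (0:ℝ))
  refine ⟨hs, ?_⟩
  rintro ⟨x₁, x₂⟩ ⟨hx₁, hx₂⟩ ⟨y₁, y₂⟩ ⟨hy₁, hy₂⟩ a c ha hc hac
  simp only [Prod.smul_mk, Prod.mk_add_mk, smul_eq_mul] at *
  rcases eq_or_lt_of_le ha with rfl | ha'
  · simp only [zero_mul, zero_add] at hac ⊢
    rw [hac]; simp
  rcases eq_or_lt_of_le hc with rfl | hc'
  · simp only [zero_mul, add_zero] at hac ⊢
    rw [hac]; simp
  set N := a * x₁ + c * y₁ with hN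
  set W := a * x₂ + c * y₂ with hW
  have hNpos : 0 < N := by positivity
  have hWpos : 0 < W := by positivity
  -- rewrite everything as W * φ(N/W) form
  have hid : ∀ u v : ℝ, 0 < u → 0 < v → u ^ r * v ^ (1 - r) = v * (u / v) ^ r := by
    intro u v hu hv
    rw [Real.div_rpow hu.le hv.le, Real.rpow_sub hv, Real.rpow_one]
    field_simp
  have hφ := convexOn_rpow_nonpos hr
  have hmem1 : x₁ / x₂ ∈ Set.Ioi (0:ℝ) := by simp [div_pos hx₁ hx₂]
  have hmem2 : y₁ / y₂ ∈ Set.Ioi (0:ℝ) := by simp [div_pos hy₁ hy₂]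
  have hw1 : (0:ℝ) ≤ a * x₂ / W := by positivity
  have hw2 : (0:ℝ) ≤ c * y₂ / W := by positivity
  have hwsum : a * x₂ / W + c * y₂ / W = 1 := by
    field_simp
    exact hW.symm
  have hcomb : (a * x₂ / W) • (x₁ / x₂) + (c * y₂ / W) • (y₁ / y₂) = N / W := by
    rw [smul_eq_mul, smul_eq_mul, hN, eq_div_iff hWpos.ne']
    field_simp
  have hconv := hφ.2 hmem1 hmem2 hw1 hw2 hwsum
  rw [hcomb] at hconv
  simp only [smul_eq_mul] at hconv
  have hmul := mul_le_mul_of_nonneg_left hconv hWpos.le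
  calc N ^ r * W ^ (1 - r) = W * (N / W) ^ r := hid _ _ hNpos hWpos
    _ ≤ W * (a * x₂ / W * (x₁ / x₂) ^ r + c * y₂ / W * (y₁ / y₂) ^ r) := hmul
    _ = a * (x₂ * (x₁ / x₂) ^ r) + c * (y₂ * (y₁ / y₂) ^ r) := by
        field_simp
    _ = a * (x₁ ^ r * x₂ ^ (1 - r)) + c * (y₁ ^ r * y₂ ^ (1 - r)) := by
        rw [hid _ _ hx₁ hx₂, hid _ _ hy₁ hy₂]

private lemma convexOn_congr {s : Set (ℝ × ℝ)} {f g : ℝ × ℝ → ℝ}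
    (hg : ConvexOn ℝ s g) (h : ∀ x ∈ s, f x = g x) : ConvexOn ℝ s f := by
  refine ⟨hg.1, fun x hx y hy a c ha hc hac => ?_⟩
  rw [h _ hx, h _ hy, h _ (hg.1 hx hy ha hc hac)]
  exact hg.2 hx hy ha hc hac

private lemma sq_convexOn {s : Set (ℝ × ℝ)} {g : ℝ × ℝ → ℝ} (hg : ConvexOn ℝ s g)
    (h0 : ∀ x ∈ s, 0 ≤ g x) : ConvexOn ℝ s (fun x => (g x) ^ 2) := by
  refine ⟨hg.1, fun x hx y hy a c ha hc hac => ?_⟩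
  have h1 := hg.2 hx hy ha hc hac
  have h2 := h0 _ (hg.1 hx hy ha hc hac)
  have hx0 := h0 _ hx
  have hy0 := h0 _ hy
  simp only [smul_eq_mul] at *
  nlinarith [sq_nonneg (g x - g y), mul_nonneg ha hc]

theorem fb_convex (b : ℝ) (hb : 2 ≤ b ∨ b ≤ 0) :
    ConvexOn ℝ {p : ℝ × ℝ | 0 < p.1 ∧ 0 < p.2}
      (fun p : ℝ × ℝ => p.1 ^ (2 - b) * p.2 ^ b) := by
  set s : Set (ℝ × ℝ) := {p : ℝ × ℝ | 0 < p.1 ∧ 0 < p.2} with hs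
  have hgconv : ConvexOn ℝ s (fun p : ℝ × ℝ => p.1 ^ ((2 - b) / 2) * p.2 ^ (b / 2)) := by
    rcases hb with hb | hb
    · have hr : (2 - b) / 2 ≤ 0 := by linarith
      have := key_convex hr
      refine convexOn_congr this fun x hx => ?_
      rw [show 1 - (2 - b) / 2 = b / 2 by ring]
    · have hr : b / 2 ≤ 0 := by linarith
      have h1 := key_convex hr
      -- compose with swap
      have hswap : ConvexOn ℝ s
          (fun p : ℝ × ℝ => p.2 ^ (b / 2) * p.1 ^ (1 - b / 2)) := by
        let A : ℝ × ℝ →ᵃ[ℝ] ℝ × ℝ := (LinearEquiv.prodComm ℝ ℝ ℝ).toLinearMap.toAffineMap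
        have hpre : A ⁻¹' s = s := by
          ext p; simp [A, hs, and_comm]
        have := h1.comp_affineMap A
        rw [hpre] at this
        exact this
      refine convexOn_congr hswap fun x hx => ?_
      rw [show 1 - b / 2 = (2 - b) / 2 by ring, mul_comm]
  have hg0 : ∀ ⦃x⦄, x ∈ s →
      0 ≤ (fun p : ℝ × ℝ => p.1 ^ ((2 - b) / 2) * p.2 ^ (b / 2)) x := by
    rintro ⟨x₁, x₂⟩ ⟨hx₁, hx₂⟩
    positivity
  have hsq := sq_convexOn hgconv hg0
  refine convexOn_congr hsq ?_
  rintro ⟨x₁, x₂⟩ ⟨hx₁, hx₂⟩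
  simp only []
  rw [mul_pow, ← Real.rpow_natCast (x₁ ^ ((2-b)/2)), ← Real.rpow_natCast (x₂ ^ (b/2)),
    ← Real.rpow_mul hx₁.le, ← Real.rpow_mul hx₂.le]
  norm_num
end

section
/- Let κ > 0 and let (x_j)_{j≥0} be a sequence of nonnegative real numbers satisfying x_j + κ x_j² ≤ x_{j-1} for all j ≥ 1. Then for every j ∈ ℕ, x_j ≤ x_0 / (1 + κ x_0 j / (1 + 2κ x_0)). -/
namespace Nonlinear

theorem discrete_gronwall (κ : ℝ) (hκ : 0 < κ) (x : ℕ → ℝ)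
    (hx : ∀ j, 0 ≤ x j) (hrec : ∀ j : ℕ, 1 ≤ j → x j + κ * x j ^ 2 ≤ x (j - 1)) :
    ∀ j : ℕ, x j ≤ x 0 / (1 + κ * x 0 * j / (1 + 2 * κ * x 0)) := by
  have hx0 := hx 0
  have hc : (0:ℝ) < 1 + 2 * κ * x 0 := by nlinarith
  set a : ℝ := κ * x 0 with ha_def
  have ha : 0 ≤ a := by positivity
  set c : ℝ := 1 + 2 * κ * x 0 with hc_def
  intro j
  induction j with
  | zero => simp
  | succ j ih =>
    have hrec' := hrec (j + 1) (by omega)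
    simp only [Nat.add_sub_cancel] at hrec'
    have hxj := hx j
    have hxj1 := hx (j + 1)
    have hjn : (0:ℝ) ≤ (j:ℝ) := Nat.cast_nonneg j
    have hd1 : (0:ℝ) < c + a * j := by nlinarith
    have hd2 : (0:ℝ) < c + a * ((j:ℝ) + 1) := by nlinarith
    have hD1 : 1 + a * (j:ℝ) / c = (c + a * j) / c := by field_simp
    have hD2 : 1 + a * ((j:ℝ) + 1) / c = (c + a * ((j:ℝ)+1)) / c := by field_simp
    have key : x 0 * c / (c + a * j) ≤
        x 0 * c / (c + a * ((j:ℝ)+1)) + κ * (x 0 * c / (c + a * ((j:ℝ)+1)))^2 := by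
      have hca : c = 1 + 2 * a := by rw [hc_def, ha_def]; ring
      have haux : c + a + a * j ≤ c^2 + a * c * j := by
        rw [hca]
        nlinarith [sq_nonneg a, mul_nonneg (mul_nonneg ha ha) hjn]
      have hprod : 0 ≤ (x 0 * c) * a * ((c^2 + a * c * j) - (c + a + a * j)) :=
        mul_nonneg (mul_nonneg (by positivity) ha) (by linarith)
      have hkey2 : κ * (x 0 * c) ^ 2 = a * c * (x 0 * c) := by rw [ha_def]; ring
      rw [div_pow, ← mul_div_assoc, div_add_div _ _ hd2.ne' (by positivity),
        div_le_div_iff₀ hd1 (by positivity), hkey2]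
      nlinarith [mul_nonneg hprod hd2.le]
    have ht0 : 0 ≤ x 0 * c / (c + a * ((j:ℝ)+1)) := by positivity
    by_contra h
    push_neg at h
    push_cast at h
    rw [hD2, div_div_eq_mul_div] at h
    rw [hD1, div_div_eq_mul_div] at ih
    set t : ℝ := x 0 * c / (c + a * ((j:ℝ)+1)) with ht_def
    have hpos : 0 < 1 + κ * (x (j+1) + t) := by nlinarith
    have hmono : t + κ * t^2 < x (j+1) + κ * x (j+1)^2 := by
      nlinarith [mul_pos (sub_pos.2 h) hpos]
    exact lt_irrefl _ (hmono.trans_le (hrec'.trans (ih.trans key)))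
end Nonlinear
end
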